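/- In a crystal poset with key map κ satisfying the standard axioms, if distinct elements u and u' are both covered by v with κ(u) ≠ κ(u'), then κ(v) is the join of κ(u) and κ(u') in left weak Bruhat order; in particular if ℓ(κ(u)) < ℓ(κ(u')) then κ(v) = κ(u'), and if ℓ(κ(u)) = ℓ(κ(u')) then ℓ(κ(v)) = ℓ(κ(u)) + 1. -/

import Mathlib

/-- The left weak Bruhat order on a Coxeter group: `u ≤ v` iff `ℓ(v u⁻¹) + ℓ(u) = ℓ(v)`. -/
noncomputable def lweakLE {B W : Type*} [Group W] {M : CoxeterMatrix B}
    (cs : CoxeterSystem M W) (u v : W) : Prop :=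
  cs.length (v * u⁻¹) + cs.length u = cs.length v


open List

namespace CoxExchange

theorem conj_eq_iff {W : Type*} [Group W] (P t q : W) :
    P * t * P⁻¹ = q ↔ t = P⁻¹ * q * P := by
  constructor
  · intro h; rw [← h]; group
  · intro h; rw [h]; group

theorem invol_conj_eq_self_iff {W : Type*} [Group W] {g : W} (hg : g * g = 1) (X : W) :
    g * X * g = g ↔ X = g := by
  have hginv : g⁻¹ = g := (eq_inv_of_mul_eq_one_right hg).symm
  rw [show g * X * g = g * X * g⁻¹ by rw [hginv], conj_eq_iff]
  rw [hginv]
  constructor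
  · intro h; rw [h, hg, one_mul]
  · intro h; rw [h, hg, one_mul]

variable {B W : Type*} [Group W] {M : CoxeterMatrix B} (cs : CoxeterSystem M W)

local prefix:100 "s" => cs.simple
local prefix:100 "π" => cs.wordProd
local prefix:100 "ℓ" => cs.length
local prefix:100 "ris" => cs.rightInvSeq

noncomputable local instance : DecidableEq W := Classical.decEq W

/-- The sign map used to build the reflection representation. -/
noncomputable def sgnFun (i : B) : W × ZMod 2 → W × ZMod 2 :=
  fun p => (s i * p.1 * s i, p.2 + if p.1 = s i then 1 else 0)

theorem sgnFun_involutive (i : B) : Function.Involutive (sgnFun cs i) := by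
  rintro ⟨t, z⟩
  simp only [sgnFun]
  have hg := cs.simple_mul_simple_self i
  have h1 : s i * (s i * t * s i) * s i = t := by
    calc s i * (s i * t * s i) * s i = (s i * s i) * t * (s i * s i) := by group
    _ = t := by rw [hg, one_mul, mul_one]
  have h2 : (s i * t * s i = s i) ↔ (t = s i) := invol_conj_eq_self_iff hg t
  refine Prod.ext h1 ?_
  by_cases h : t = s i
  · show z + (if t = s i then 1 else 0) + (if s i * t * s i = s i then 1 else 0) = z
    rw [if_pos h, if_pos (h2.mpr h)]
    show z + 1 + 1 = z
    rw [add_assoc]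
    norm_num
    decide
  · show z + (if t = s i then 1 else 0) + (if s i * t * s i = s i then 1 else 0) = z
    rw [if_neg h, if_neg (fun hh => h (h2.mp hh))]
    show z + 0 + 0 = z
    ring

/-- The permutation of `W × ZMod 2` associated to a simple reflection. -/
noncomputable def sgnPerm (i : B) : Equiv.Perm (W × ZMod 2) :=
  (sgnFun_involutive cs i).toPerm

theorem sgnPerm_apply (i : B) (t : W) (z : ZMod 2) :
    sgnPerm cs i (t, z) = (s i * t * s i, z + if t = s i then 1 else 0) := rfl

theorem sgnPerm_prod_apply (ω : List B) (t : W) (z : ZMod 2) :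
    (List.map (sgnPerm cs) ω).prod (t, z) =
      (π ω * t * (π ω)⁻¹, z + ((ris ω).count t : ZMod 2)) := by
  induction ω generalizing z with
  | nil => simp [CoxeterSystem.rightInvSeq]
  | cons i ω ih =>
    rw [List.map_cons, List.prod_cons, Equiv.Perm.mul_apply, ih, sgnPerm_apply]
    have hgi : (s i)⁻¹ = s i := cs.inv_simple i
    have hconj : (π ω * t * (π ω)⁻¹ = s i) ↔ (t = (π ω)⁻¹ * s i * π ω) := conj_eq_iff _ _ _
    refine Prod.ext ?_ ?_
    · show s i * (π ω * t * (π ω)⁻¹) * s i = π (i :: ω) * t * (π (i :: ω))⁻¹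
      rw [cs.wordProd_cons, mul_inv_rev, hgi]
      group
    · show (z + ((ris ω).count t : ZMod 2) + if π ω * t * (π ω)⁻¹ = s i then 1 else 0)
        = z + (((ris (i :: ω))).count t : ZMod 2)
      have hris : ris (i :: ω) = ((π ω)⁻¹ * s i * π ω) :: ris ω := rfl
      rw [hris, List.count_cons]
      by_cases h : t = (π ω)⁻¹ * s i * π ω
      · rw [if_pos (hconj.mpr h), if_pos (beq_iff_eq.mpr h.symm)]
        push_cast
        ring
      · rw [if_neg (fun hh => h (hconj.mp hh)),
          if_neg (fun hh => h (beq_iff_eq.mp hh).symm)]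
        push_cast
        ring

section Part2

variable {B W : Type*} [Group W] {M : CoxeterMatrix B} (cs : CoxeterSystem M W)

local prefix:100 "s" => cs.simple
local prefix:100 "π" => cs.wordProd
local prefix:100 "ℓ" => cs.length
local prefix:100 "ris" => cs.rightInvSeq

theorem braid_shift (i j : B) : ∀ k : ℕ, s j * (s i * s j)^k = (s j * s i)^k * s j := by
  intro k
  induction k with
  | zero => simp
  | succ k ih =>
    rw [pow_succ, pow_succ]
    generalize hX : (s i * s j)^k = X at ih ⊢
    generalize hY : (s j * s i)^k = Y at ih ⊢
    calc s j * (X * (s i * s j)) = (s j * X) * (s i * s j) := by group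
    _ = Y * s j * (s i * s j) := by rw [ih]
    _ = Y * (s j * s i) * s j := by group

theorem braid_shift' (i j : B) : ∀ k : ℕ, s j * (s j * s i)^k = (s i * s j)^k * s j := by
  intro k
  have h := braid_shift cs i j k
  have hjj := cs.simple_mul_simple_self j
  have h2 : (s j * s i)^k = s j * ((s i * s j)^k * s j) := by
    rw [← mul_assoc, h, mul_assoc, hjj, mul_one]
  rw [h2, ← mul_assoc, hjj, one_mul]

theorem pow_mul_pow_inv (i j : B) (k : ℕ) : (s i * s j)^k * (s j * s i)^k = 1 := by
  have : (s j * s i) = (s i * s j)⁻¹ := by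
    rw [mul_inv_rev, cs.inv_simple, cs.inv_simple]
  rw [this, inv_pow, mul_inv_cancel]

theorem alt_conj (i j : B) : ∀ n : ℕ,
    s (if Even n then j else i) * π (CoxeterSystem.alternatingWord i j n)
      = π (CoxeterSystem.alternatingWord i j n) * ((s j * s i)^n * s j) := by
  intro n
  have hjj := cs.simple_mul_simple_self j
  rw [cs.prod_alternatingWord_eq_mul_pow]
  rcases Nat.even_or_odd n with he | ho
  · obtain ⟨q, hq⟩ := he
    have hdiv : n / 2 = q := by omega
    rw [if_pos ⟨q, hq⟩, if_pos ⟨q, hq⟩, hdiv, one_mul]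
    have hn : (s j * s i)^n = (s j * s i)^q * (s j * s i)^q := by
      rw [← pow_add, ← hq]
    rw [hn, braid_shift cs i j q]
    have hinv := pow_mul_pow_inv cs i j q
    generalize hX : (s i * s j)^q = X at hinv ⊢
    generalize hY : (s j * s i)^q = Y at hinv ⊢
    calc Y * s j = 1 * (Y * s j) := by rw [one_mul]
    _ = (X * Y) * (Y * s j) := by rw [hinv]
    _ = X * (Y * Y * s j) := by group
  · obtain ⟨q, hq⟩ := ho
    have hne : ¬ Even n := by simp [hq, parity_simps]
    have hdiv : n / 2 = q := by omega
    rw [if_neg hne, if_neg hne, hdiv]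
    have hn : (s j * s i)^n = (s j * s i)^q * (s j * s i)^(q+1) := by
      rw [← pow_add]
      have he : q + (q + 1) = n := by omega
      rw [he]
    rw [hn]
    have hinv := pow_mul_pow_inv cs i j q
    have hb' := braid_shift' cs i j (q+1)
    have hA1 : (s i * s j)^(q+1) = (s i * s j) * (s i * s j)^q := by rw [pow_succ']
    generalize hX1 : (s i * s j)^(q+1) = X1 at hb' hA1 ⊢
    generalize hY1 : (s j * s i)^(q+1) = Y1 at hb' hA1 ⊢
    generalize hX : (s i * s j)^q = X at hinv hA1 ⊢
    generalize hY : (s j * s i)^q = Y at hinv ⊢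
    have key : s j * X * (Y * Y1 * s j) = s i * (s j * X) := by
      calc s j * X * (Y * Y1 * s j) = s j * ((X * Y) * (Y1 * s j)) := by group
      _ = s j * (Y1 * s j) := by rw [hinv, one_mul]
      _ = (s j * Y1) * s j := by group
      _ = (X1 * s j) * s j := by rw [hb']
      _ = X1 * (s j * s j) := by group
      _ = X1 := by rw [hjj, mul_one]
      _ = s i * (s j * X) := by rw [hA1]; group
    exact key.symm

theorem ris_alt (i j : B) : ∀ n : ℕ,
    ris (CoxeterSystem.alternatingWord i j n)
      = ((List.range n).reverse).map (fun k => (s j * s i)^k * s j) := by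
  intro n
  induction n with
  | zero => simp [CoxeterSystem.alternatingWord, CoxeterSystem.rightInvSeq]
  | succ n ih =>
    rw [CoxeterSystem.alternatingWord_succ']
    have hris : ris ((if Even n then j else i) :: CoxeterSystem.alternatingWord i j n)
        = ((π (CoxeterSystem.alternatingWord i j n))⁻¹ * s (if Even n then j else i)
            * π (CoxeterSystem.alternatingWord i j n))
          :: ris (CoxeterSystem.alternatingWord i j n) := rfl
    rw [hris, ih]
    have hhead : (π (CoxeterSystem.alternatingWord i j n))⁻¹ * s (if Even n then j else i)
        * π (CoxeterSystem.alternatingWord i j n) = (s j * s i)^n * s j := by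
      rw [mul_assoc, alt_conj cs i j n, ← mul_assoc, inv_mul_cancel, one_mul]
    rw [hhead, List.range_succ, List.reverse_append]
    simp

theorem prod_sgnPerm_alt (i j : B) : ∀ m : ℕ,
    (List.map (sgnPerm cs) (CoxeterSystem.alternatingWord i j (2*m))).prod
      = (sgnPerm cs i * sgnPerm cs j)^m := by
  intro m
  induction m with
  | zero => simp [CoxeterSystem.alternatingWord]
  | succ m ih =>
    have h2 : 2 * (m+1) = (2*m+1)+1 := by omega
    rw [h2, CoxeterSystem.alternatingWord_succ', CoxeterSystem.alternatingWord_succ']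
    rw [if_neg (by simp [parity_simps]), if_pos (by simp [parity_simps])]
    rw [List.map_cons, List.map_cons, List.prod_cons, List.prod_cons, ih]
    rw [pow_succ', ← mul_assoc]

theorem sgn_liftable : CoxeterMatrix.IsLiftable M (fun i => sgnPerm cs i) := by
  intro i j
  apply Equiv.ext
  rintro ⟨t, z⟩
  show ((sgnPerm cs i * sgnPerm cs j) ^ M i j) (t, z) = (1 : Equiv.Perm (W × ZMod 2)) (t, z)
  rw [← prod_sgnPerm_alt cs i j (M i j), sgnPerm_prod_apply]
  have hπ : π (CoxeterSystem.alternatingWord i j (2 * M i j)) = 1 := by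
    rw [cs.prod_alternatingWord_eq_mul_pow, if_pos (by exact ⟨M i j, by omega⟩)]
    rw [one_mul, (by omega : 2 * M i j / 2 = M i j), cs.simple_mul_simple_pow]
  have hcount : ((ris (CoxeterSystem.alternatingWord i j (2 * M i j))).count t : ZMod 2) = 0 := by
    rw [ris_alt cs i j, List.map_reverse, List.count_reverse]
    have hsplit : List.range (2 * M i j) = List.range (M i j)
        ++ (List.range (M i j)).map (fun x => M i j + x) := by
      rw [(by omega : 2 * M i j = M i j + M i j), List.range_add]
    rw [hsplit, List.map_append, List.count_append, List.map_map]
    have hmapeq : ((List.range (M i j)).map ((fun k => (s j * s i)^k * s j) ∘ (fun x => M i j + x)))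
        = (List.range (M i j)).map (fun k => (s j * s i)^k * s j) := by
      apply List.map_congr_left
      intro k _
      show (s j * s i)^(M i j + k) * s j = (s j * s i)^k * s j
      rw [pow_add, cs.simple_mul_simple_pow' i j, one_mul]
    rw [hmapeq, ← two_mul]
    push_cast
    have h2 : (2 : ZMod 2) = 0 := by decide
    rw [h2, zero_mul]
  rw [hπ, hcount, add_zero, one_mul, inv_one, mul_one]
  simp

end Part2

section Part3

variable {B W : Type*} [Group W] {M : CoxeterMatrix B} (cs : CoxeterSystem M W)

local prefix:100 "s" => cs.simple
local prefix:100 "π" => cs.wordProd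
local prefix:100 "ℓ" => cs.length
local prefix:100 "ris" => cs.rightInvSeq

/-- The reflection representation on `W × ZMod 2`. -/
noncomputable def sgnRep : W →* Equiv.Perm (W × ZMod 2) :=
  cs.lift ⟨fun i => sgnPerm cs i, sgn_liftable cs⟩

theorem sgnRep_simple (i : B) : sgnRep cs (s i) = sgnPerm cs i :=
  cs.lift_apply_simple (sgn_liftable cs) i

theorem sgnRep_wordProd (ω : List B) :
    sgnRep cs (π ω) = (List.map (sgnPerm cs) ω).prod := by
  rw [CoxeterSystem.wordProd, map_list_prod, List.map_map]
  congr 1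
  apply List.map_congr_left
  intro k _
  exact sgnRep_simple cs k

/-- The parity of the number of occurrences of `t` in any inversion sequence of `w`. -/
noncomputable def eta (w t : W) : ZMod 2 := ((sgnRep cs w) (t, 0)).2

theorem eta_wordProd (ω : List B) (t : W) :
    eta cs (π ω) t = ((ris ω).count t : ZMod 2) := by
  unfold eta
  rw [sgnRep_wordProd, sgnPerm_prod_apply]
  simp

theorem sgnRep_apply (w t : W) (z : ZMod 2) :
    sgnRep cs w (t, z) = (w * t * w⁻¹, z + eta cs w t) := by
  obtain ⟨ω, hω⟩ := cs.wordProd_surjective w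
  subst hω
  rw [sgnRep_wordProd, sgnPerm_prod_apply, eta_wordProd]

theorem eta_mul (u v t : W) :
    eta cs (u * v) t = eta cs v t + eta cs u (v * t * v⁻¹) := by
  show ((sgnRep cs (u * v)) (t, 0)).2 = _
  rw [map_mul, Equiv.Perm.mul_apply, sgnRep_apply, sgnRep_apply]
  show 0 + eta cs v t + eta cs u (v * t * v⁻¹) = _
  rw [zero_add]

theorem eta_simple (i : B) (t : W) : eta cs (s i) t = if t = s i then 1 else 0 := by
  have h1 := eta_wordProd cs [i] t
  rw [cs.wordProd_singleton] at h1
  rw [h1, cs.rightInvSeq_singleton]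
  by_cases h : t = s i
  · simp [h]
  · simp [h, fun hh : s i = t => h hh.symm, List.count_eq_zero_of_not_mem]

theorem eta_refl_self {t : W} (ht : cs.IsReflection t) : eta cs t t = 1 := by
  obtain ⟨w, i, rfl⟩ := ht
  revert i
  refine cs.simple_induction_left
      (p := fun w => ∀ i : B, eta cs (w * s i * w⁻¹) (w * s i * w⁻¹) = 1) w ?_ ?_
  · intro i
    simp only [one_mul, inv_one, mul_one]
    rw [eta_simple, if_pos rfl]
  · intro w k hp i
    have hkk := cs.simple_mul_simple_self k
    set t' := w * s i * w⁻¹ with ht'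
    have ht'refl : cs.IsReflection t' := ⟨w, i, rfl⟩
    have htt' : t' * t' = 1 := ht'refl.mul_self
    have hrw : s k * w * s i * (s k * w)⁻¹ = (s k * t') * s k := by
      rw [mul_inv_rev, cs.inv_simple, ht']
      group
    rw [hrw]
    rw [eta_mul cs (s k * t') (s k)]
    have h1 : s k * ((s k * t') * s k) * (s k)⁻¹ = t' := by
      rw [cs.inv_simple]
      calc s k * (s k * t' * s k) * s k = (s k * s k) * t' * (s k * s k) := by group
      _ = t' := by rw [hkk, one_mul, mul_one]
    rw [h1, eta_mul cs (s k) t']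
    have h2 : t' * t' * t'⁻¹ = t' := by
      rw [htt', one_mul, ht'refl.inv]
    rw [h2, hp i]
    have h3 : ((s k * t') * s k = s k) ↔ (t' = s k) := by
      rw [mul_assoc, ← mul_assoc]
      exact invol_conj_eq_self_iff hkk t'
    rw [eta_simple, eta_simple]
    by_cases h : t' = s k
    · rw [if_pos h, if_pos (h3.mpr h)]
      decide
    · rw [if_neg h, if_neg (fun hh => h (h3.mp hh))]
      decide

theorem isRightInversion_of_eta_one {w t : W} (h : eta cs w t = 1) :
    cs.IsRightInversion w t := by
  obtain ⟨ω, hred, hw⟩ := cs.exists_reduced_word' w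
  subst hw
  rw [eta_wordProd] at h
  have hmem : t ∈ ris ω := by
    by_contra hmem
    rw [List.count_eq_zero_of_not_mem hmem] at h
    simp at h
  exact cs.isRightInversion_of_mem_rightInvSeq hred hmem

theorem eta_eq_one_of_inversion {w t : W} (ht : cs.IsReflection t)
    (hlt : ℓ (w * t) < ℓ w) : eta cs w t = 1 := by
  have hzo : ∀ x : ZMod 2, x = 0 ∨ x = 1 := by decide
  have hwt : eta cs (w * t) t = 0 := by
    rcases hzo (eta cs (w * t) t) with h | h
    · exact h
    · exfalso
      have := (isRightInversion_of_eta_one cs h).2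
      rw [mul_assoc, ht.mul_self, mul_one] at this
      omega
  have key : eta cs ((w * t) * t) t = 1 := by
    rw [eta_mul cs (w * t) t]
    have h2 : t * t * t⁻¹ = t := by rw [ht.mul_self, one_mul, ht.inv]
    rw [h2, eta_refl_self cs ht, hwt, add_zero]
  rw [mul_assoc, ht.mul_self, mul_one] at key
  exact key

/-- The strong exchange property. -/
theorem strong_exchange {ω : List B} (hred : cs.IsReduced ω) {t : W}
    (ht : cs.IsReflection t) (hlt : ℓ (π ω * t) < ℓ (π ω)) : t ∈ ris ω := by
  have h := eta_eq_one_of_inversion cs ht hlt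
  rw [eta_wordProd] at h
  by_contra hmem
  rw [List.count_eq_zero_of_not_mem hmem] at h
  simp at h

end Part3

section Part4

variable {B W : Type*} [Group W] {M : CoxeterMatrix B} (cs : CoxeterSystem M W)

local prefix:100 "s" => cs.simple
local prefix:100 "π" => cs.wordProd
local prefix:100 "ℓ" => cs.length
local prefix:100 "ris" => cs.rightInvSeq

theorem concat_reduced_of_descent {x : W} {k : B} (hx : ℓ (x * s k) < ℓ x)
    {ω' : List B} (hred' : cs.IsReduced ω') (hw' : x * s k = π ω') :
    π (ω'.concat k) = x ∧ cs.IsReduced (ω'.concat k) := by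
  have hkk := cs.simple_mul_simple_self k
  have hπ : π (ω'.concat k) = x := by
    rw [cs.wordProd_concat, ← hw', mul_assoc, hkk, mul_one]
  have hlen : ℓ (x * s k) + 1 = ℓ x := (cs.length_mul_simple x k).resolve_left (by omega)
  refine ⟨hπ, ?_⟩
  have hr2 : ℓ (x * s k) = ω'.length := by rw [hw']; exact hred'
  show ℓ (π (ω'.concat k)) = (ω'.concat k).length
  rw [hπ, List.length_concat]
  omega

/-- If `s i` and `s j` are distinct right descents of `w`, then `ℓ(w sᵢ sⱼ) = ℓ(w) - 2`. -/
theorem descent_pair {w : W} {i j : B} (hi : ℓ (w * s i) < ℓ w) (hj : ℓ (w * s j) < ℓ w)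
    (hij : s i ≠ s j) : ℓ (w * s i * s j) + 2 = ℓ w := by
  obtain ⟨ω', hred', hw'⟩ := cs.exists_reduced_word' (w * s j)
  obtain ⟨hπ, hred⟩ := concat_reduced_of_descent cs hj hred' hw'
  have hmem : s i ∈ ris (ω'.concat j) :=
    strong_exchange cs hred (cs.isReflection_simple i) (by rw [hπ]; exact hi)
  rw [cs.rightInvSeq_concat, List.concat_eq_append, List.mem_append] at hmem
  have hlj : ℓ (w * s j) + 1 = ℓ w := (cs.length_mul_simple w j).resolve_left (by omega)
  have hli : ℓ (w * s i) + 1 = ℓ w := (cs.length_mul_simple w i).resolve_left (by omega)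
  rcases hmem with hmem | hmem
  · obtain ⟨r, hr, hconj⟩ := List.mem_map.mp hmem
    have hrval : r = s j * s i * s j := by
      have : s j * r * (s j)⁻¹ = s i := hconj
      rw [cs.inv_simple] at this
      rw [← this]
      have hjj := cs.simple_mul_simple_self j
      calc r = (s j * s j) * r * (s j * s j) := by rw [hjj, one_mul, mul_one]
      _ = s j * (s j * r * s j) * s j := by group
    have hinv := cs.isRightInversion_of_mem_rightInvSeq hred' hr
    have h2 := hinv.2
    rw [← hw', hrval] at h2
    have heq : w * s j * (s j * s i * s j) = w * s i * s j := by
      have hjj := cs.simple_mul_simple_self j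
      calc w * s j * (s j * s i * s j) = w * (s j * s j) * s i * s j := by group
      _ = w * s i * s j := by rw [hjj, mul_one]
    rw [heq] at h2
    -- h2 : ℓ (w * s i * s j) < ℓ (w * s j)
    have h3 := cs.length_mul_simple (w * s i) j
    omega
  · exfalso
    apply hij
    have : s i = s j := by simpa using hmem
    exact this

theorem inversion_mono {u x t : W} (hux : lweakLE cs u x) (ht : cs.IsRightInversion u t) :
    cs.IsRightInversion x t := by
  refine ⟨ht.1, ?_⟩
  have heq : x * u⁻¹ * (u * t) = x * t := by group
  have h1 := cs.length_mul_le (x * u⁻¹) (u * t)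
  rw [heq] at h1
  have h2 := ht.2
  unfold lweakLE at hux
  have h3 : 1 ≤ ℓ u := by
    by_contra h
    have hu1 : u = 1 := by
      rw [← cs.length_eq_zero_iff]; omega
    rw [hu1, one_mul] at h2
    simp [cs.length_one] at h2
  omega

theorem inversion_mul_simple {x : W} {k : B} {r : W} (hx : ℓ (x * s k) < ℓ x)
    (hr : cs.IsRightInversion x r) (hrk : r ≠ s k) :
    cs.IsRightInversion (x * s k) (s k * r * s k) := by
  obtain ⟨ω', hred', hw'⟩ := cs.exists_reduced_word' (x * s k)
  obtain ⟨hπ, hred⟩ := concat_reduced_of_descent cs hx hred' hw'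
  have hmem : r ∈ ris (ω'.concat k) :=
    strong_exchange cs hred hr.1 (by rw [hπ]; exact hr.2)
  rw [cs.rightInvSeq_concat, List.concat_eq_append, List.mem_append] at hmem
  rcases hmem with hmem | hmem
  · obtain ⟨r', hr', hconj⟩ := List.mem_map.mp hmem
    have hkk := cs.simple_mul_simple_self k
    have hrval : s k * r * s k = r' := by
      have h : s k * r' * (s k)⁻¹ = r := hconj
      rw [cs.inv_simple] at h
      rw [← h]
      calc s k * (s k * r' * s k) * s k = (s k * s k) * r' * (s k * s k) := by group
      _ = r' := by rw [hkk, one_mul, mul_one]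
    rw [hrval]
    have hinv := cs.isRightInversion_of_mem_rightInvSeq hred' hr'
    rw [← hw'] at hinv
    exact hinv
  · exfalso
    apply hrk
    simpa using hmem

theorem lweakLE_of_inversions : ∀ n : ℕ, ∀ u x : W, ℓ u = n →
    (∀ t, cs.IsRightInversion u t → cs.IsRightInversion x t) → lweakLE cs u x := by
  intro n
  induction n using Nat.strong_induction_on with
  | _ n ih =>
    intro u x hn h
    by_cases hu : u = 1
    · subst hu
      unfold lweakLE
      simp [cs.length_one]
    · obtain ⟨k, hk⟩ := cs.exists_rightDescent_of_ne_one hu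
      have hkdes : ℓ (u * s k) < ℓ u := hk
      have hkinvu : cs.IsRightInversion u (s k) := ⟨cs.isReflection_simple k, hk⟩
      have hkx := h _ hkinvu
      have hlu : ℓ (u * s k) + 1 = ℓ u := (cs.length_mul_simple u k).resolve_left (by omega)
      have hlx : ℓ (x * s k) + 1 = ℓ x :=
        (cs.length_mul_simple x k).resolve_left (by have := hkx.2; omega)
      have hkk := cs.simple_mul_simple_self k
      have h' : ∀ t, cs.IsRightInversion (u * s k) t → cs.IsRightInversion (x * s k) t := by
        intro t ht
        have hts : t ≠ s k := by
          intro hts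
          subst hts
          have h2 := ht.2
          have heq : u * s k * s k = u := by rw [mul_assoc, hkk, mul_one]
          rw [heq] at h2
          omega
        have hrrefl : cs.IsReflection (s k * t * s k) := by
          have := ht.1.conj (s k)
          rwa [cs.inv_simple] at this
        have hrinvu : cs.IsRightInversion u (s k * t * s k) := by
          refine ⟨hrrefl, ?_⟩
          have heq : u * (s k * t * s k) = ((u * s k) * t) * s k := by group
          rw [heq]
          have hle := cs.length_mul_le ((u * s k) * t) (s k)
          rw [cs.length_simple] at hle
          have h2 := ht.2
          omega
        have hrinvx := h _ hrinvu
        have hne' : s k * t * s k ≠ s k := by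
          intro hh
          exact hts ((invol_conj_eq_self_iff hkk t).mp hh)
        have hfin := inversion_mul_simple cs (by omega) hrinvx hne'
        have heq : s k * (s k * t * s k) * s k = t := by
          calc s k * (s k * t * s k) * s k = (s k * s k) * t * (s k * s k) := by group
          _ = t := by rw [hkk, one_mul, mul_one]
        rwa [heq] at hfin
      have hres := ih (ℓ (u * s k)) (by omega) (u * s k) (x * s k) rfl h'
      unfold lweakLE at *
      have heq : x * s k * (u * s k)⁻¹ = x * u⁻¹ := by
        rw [mul_inv_rev, cs.inv_simple, ← mul_assoc, mul_assoc x (s k) (s k), hkk, mul_one]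
      rw [heq] at hres
      omega

/-- The join property: if `w` covers both `a` and `b` (as `sᵢa` and `sⱼb`) with `a ≠ b`,
then any common upper bound `x` of `a` and `b` in left weak order is above `w`. -/
theorem join_lemma {a b w x : W} {i j : B} (hwa : w = s i * a) (hla : ℓ w = ℓ a + 1)
    (hwb : w = s j * b) (hlb : ℓ w = ℓ b + 1) (hab : a ≠ b)
    (ha : lweakLE cs a x) (hb : lweakLE cs b x) : lweakLE cs w x := by
  apply lweakLE_of_inversions cs (ℓ w) w x rfl
  intro t htinv
  have hii := cs.simple_mul_simple_self i
  have hjj := cs.simple_mul_simple_self j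
  have ha' : a = s i * w := by rw [hwa, ← mul_assoc, hii, one_mul]
  have hb' : b = s j * w := by rw [hwb, ← mul_assoc, hjj, one_mul]
  obtain ⟨ωa, hreda, hwa'⟩ := cs.exists_reduced_word' a
  have hπ : π (i :: ωa) = w := by rw [cs.wordProd_cons, ← hwa', hwa]
  have hred : cs.IsReduced (i :: ωa) := by
    have h1 : ℓ a = ωa.length := by rw [hwa']; exact hreda
    show ℓ (π (i :: ωa)) = (i :: ωa).length
    rw [hπ, List.length_cons]
    omega
  have hmem := strong_exchange cs hred htinv.1 (by rw [hπ]; exact htinv.2)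
  have hris : ris (i :: ωa) = ((π ωa)⁻¹ * s i * π ωa) :: ris ωa := rfl
  rw [hris] at hmem
  rcases List.mem_cons.mp hmem with hm | hm
  · -- t = a⁻¹ * sᵢ * a; it is an inversion of b
    have hta : t = a⁻¹ * s i * a := by rw [hm, hwa']
    apply inversion_mono cs hb
    refine ⟨htinv.1, ?_⟩
    have ht2 : t = w⁻¹ * s i * w := by
      rw [hta, ha', mul_inv_rev, cs.inv_simple, mul_assoc w⁻¹ (s i) (s i), hii, mul_one,
        ← mul_assoc]
    have hbt : b * t = s j * s i * w := by
      rw [ht2, hb']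
      calc s j * w * (w⁻¹ * s i * w) = s j * (w * w⁻¹) * (s i * w) := by group
      _ = s j * s i * w := by rw [mul_inv_cancel, mul_one, ← mul_assoc]
    have hij : s i ≠ s j := by
      intro hh
      apply hab
      rw [ha', hb', hh]
    have h1 : ℓ (w⁻¹ * s i) < ℓ w⁻¹ := by
      have : w⁻¹ * s i = a⁻¹ := by rw [ha', mul_inv_rev, cs.inv_simple]
      rw [this, cs.length_inv, cs.length_inv]
      omega
    have h2 : ℓ (w⁻¹ * s j) < ℓ w⁻¹ := by
      have : w⁻¹ * s j = b⁻¹ := by rw [hb', mul_inv_rev, cs.inv_simple]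
      rw [this, cs.length_inv, cs.length_inv]
      omega
    have hdp := descent_pair cs h1 h2 hij
    have hinv2 : (w⁻¹ * s i * s j)⁻¹ = s j * s i * w := by
      rw [mul_inv_rev, mul_inv_rev, cs.inv_simple, cs.inv_simple, inv_inv]
      group
    rw [cs.length_inv] at hdp
    have : ℓ (s j * s i * w) = ℓ (w⁻¹ * s i * s j) := by
      rw [← hinv2, cs.length_inv]
    rw [hbt, this]
    omega
  · -- t is an inversion of a
    apply inversion_mono cs ha
    have := cs.isRightInversion_of_mem_rightInvSeq hreda hm
    rwa [← hwa'] at this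

end Part4

section Part5

variable {B W : Type*} [Group W] {M : CoxeterMatrix B} (cs : CoxeterSystem M W)

local prefix:100 "s" => cs.simple
local prefix:100 "ℓ" => cs.length

theorem lweak_refl (w : W) : lweakLE cs w w := by
  unfold lweakLE
  rw [mul_inv_cancel, cs.length_one, zero_add]

theorem lweak_step {a : W} {i : B} (h : ℓ (s i * a) = ℓ a + 1) :
    lweakLE cs a (s i * a) := by
  unfold lweakLE
  rw [mul_inv_cancel_right, cs.length_simple, h]
  omega

end Part5

end CoxExchange

/-- In a crystal poset with a key map `κ` satisfying the standard axioms, if distinct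
elements `u` and `u'` are both covered by `v` with `κ(u) ≠ κ(u')`, then `κ(v)` is the
join of `κ(u)` and `κ(u')` in the left weak Bruhat order; in particular if
`ℓ(κ(u)) < ℓ(κ(u'))` then `κ(v) = κ(u')`, and if `ℓ(κ(u)) = ℓ(κ(u'))` then
`ℓ(κ(v)) = ℓ(κ(u)) + 1`. -/
theorem stmt_12 {Crys I W : Type*} [Group W] {M : CoxeterMatrix I}
    (cs : CoxeterSystem M W)
    (C : I → Crys → Crys → Prop)
    (hup : ∀ (i : I) (u v v' : Crys), C i u v → C i u v' → v = v')
    (hdown : ∀ (i : I) (u u' v : Crys), C i u v → C i u' v → u = u')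
    (κ : Crys → W)
    (h1 : ∀ (i : I) (u v : Crys), C i u v → (∃ u', C i u' u) → κ v = κ u)
    (h2 : ∀ (i : I) (u v : Crys), C i u v → κ v = κ u ∨ κ v = cs.simple i * κ u)
    (h3 : ∀ (i : I) (u : Crys), ¬(∃ u', C i u' u) →
      cs.length (cs.simple i * κ u) = cs.length (κ u) + 1)
    {u u' v : Crys} {i j : I}
    (hne : u ≠ u') (hcov : C i u v) (hcov' : C j u' v) (hκ : κ u ≠ κ u') :
    (lweakLE cs (κ u) (κ v) ∧ lweakLE cs (κ u') (κ v) ∧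
      ∀ w : W, lweakLE cs (κ u) w → lweakLE cs (κ u') w → lweakLE cs (κ v) w) ∧
    (cs.length (κ u) < cs.length (κ u') → κ v = κ u') ∧
    (cs.length (κ u) = cs.length (κ u') →
      cs.length (κ v) = cs.length (κ u) + 1) := by
  rcases h2 i u v hcov with hvu | hvu <;> rcases h2 j u' v hcov' with hvu' | hvu'
  · -- κ v = κ u and κ v = κ u' : contradiction
    exact absurd (hvu.symm.trans hvu') hκ
  · -- κ v = κ u, κ v = sⱼ κ u'
    have hnev : κ v ≠ κ u' := by rw [hvu]; exact hκ
    have hnolow : ¬ ∃ u0, C j u0 u' := fun hex => hnev (h1 j u' v hcov' hex)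
    have hlen' : cs.length (κ v) = cs.length (κ u') + 1 := by rw [hvu']; exact h3 j u' hnolow
    have e1 : cs.length (κ v) = cs.length (κ u) := by rw [hvu]
    refine ⟨⟨?_, ?_, ?_⟩, ?_, ?_⟩
    · rw [hvu]; exact CoxExchange.lweak_refl cs (κ u)
    · rw [hvu']
      exact CoxExchange.lweak_step cs (by rw [← hvu']; exact hlen')
    · intro w hA hB
      rw [hvu]; exact hA
    · intro hlt; exfalso; omega
    · intro heq; exfalso; omega
  · -- κ v = sᵢ κ u, κ v = κ u'
    have hnev : κ v ≠ κ u := by rw [hvu']; exact fun hh => hκ hh.symm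
    have hnolow : ¬ ∃ u0, C i u0 u := fun hex => hnev (h1 i u v hcov hex)
    have hlen : cs.length (κ v) = cs.length (κ u) + 1 := by rw [hvu]; exact h3 i u hnolow
    refine ⟨⟨?_, ?_, ?_⟩, ?_, ?_⟩
    · rw [hvu]
      exact CoxExchange.lweak_step cs (by rw [← hvu]; exact hlen)
    · rw [hvu']; exact CoxExchange.lweak_refl cs (κ u')
    · intro w hA hB
      rw [hvu']; exact hB
    · intro _; exact hvu'
    · intro _; exact hlen
  · -- κ v = sᵢ κ u, κ v = sⱼ κ u'
    have hnev : κ v ≠ κ u := by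
      intro hh
      have hs1 : cs.simple i = 1 := by
        have : cs.simple i * κ u = 1 * κ u := by rw [one_mul, ← hvu, hh]
        exact mul_right_cancel this
      have := cs.length_simple i
      rw [hs1, cs.length_one] at this
      omega
    have hnev' : κ v ≠ κ u' := by
      intro hh
      have hs1 : cs.simple j = 1 := by
        have : cs.simple j * κ u' = 1 * κ u' := by rw [one_mul, ← hvu', hh]
        exact mul_right_cancel this
      have := cs.length_simple j
      rw [hs1, cs.length_one] at this
      omega
    have hnolow : ¬ ∃ u0, C i u0 u := fun hex => hnev (h1 i u v hcov hex)
    have hnolow' : ¬ ∃ u0, C j u0 u' := fun hex => hnev' (h1 j u' v hcov' hex)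
    have hlen : cs.length (κ v) = cs.length (κ u) + 1 := by rw [hvu]; exact h3 i u hnolow
    have hlen' : cs.length (κ v) = cs.length (κ u') + 1 := by rw [hvu']; exact h3 j u' hnolow'
    refine ⟨⟨?_, ?_, ?_⟩, ?_, ?_⟩
    · rw [hvu]
      exact CoxExchange.lweak_step cs (by rw [← hvu]; exact hlen)
    · rw [hvu']
      exact CoxExchange.lweak_step cs (by rw [← hvu']; exact hlen')
    · intro w hA hB
      exact CoxExchange.join_lemma cs hvu hlen hvu' hlen' hκ hA hB
    · intro hlt; exfalso; omega
    · intro _; exact hlen
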